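/- For the confounded MDP decomposition: the interventional expected reward decomposes as R(s,x) = P(x|s)·E[f_Y(s,x,U) | f_X(s,U)=x] + P(¬x|s)·E[f_Y(s,x,U) | f_X(s,U)≠x], and consequently, since f_Y takes values in [a,b], one has the two-sided bound P(x|s)·R̃(s,x) + a·P(¬x|s) ≤ R(s,x) ≤ P(x|s)·R̃(s,x) + b·P(¬x|s). -/

import Mathlib

open Finset

/-- decomposition of the interventional expected reward, and the resulting
two-sided (Manski) bound. With `P(x|s) = P(fX(s,U)=x)` strictly between 0 and 1,
`R(s,x) = P(x|s)·E[fY(s,x,U) ∣ fX(s,U)=x] + (1 − P(x|s))·E[fY(s,x,U) ∣ fX(s,U)≠x]`,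
and since `fY ∈ [a,b]`,
`P(x|s)·R̃(s,x) + a·(1 − P(x|s)) ≤ R(s,x) ≤ P(x|s)·R̃(s,x) + b·(1 − P(x|s))`. -/
theorem reward_decomposition_and_two_sided_bound
    {S X U : Type*} [Fintype S] [Fintype X] [Fintype U] [DecidableEq X]
    (a b : ℝ)
    (μ : U → ℝ) (hμ0 : ∀ u, 0 ≤ μ u) (hμ1 : ∑ u, μ u = 1)
    (fY : S → X → U → ℝ) (hYa : ∀ s x u, a ≤ fY s x u) (hYb : ∀ s x u, fY s x u ≤ b)
    (fX : S → U → X)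
    (Pb : S → X → ℝ) (hPb : ∀ s x, Pb s x = ∑ u, if fX s u = x then μ u else 0)
    (hPbpos : ∀ s x, 0 < Pb s x) (hPblt : ∀ s x, Pb s x < 1)
    (R : S → X → ℝ) (hR : ∀ s x, R s x = ∑ u, μ u * fY s x u)
    -- `R̃(s,x) = E[fY(s,x,U) ∣ fX(s,U)=x]`
    (Rtil : S → X → ℝ)
    (hRtil : ∀ s x, Rtil s x = (∑ u, if fX s u = x then μ u * fY s x u else 0) / Pb s x)
    -- `E[fY(s,x,U) ∣ fX(s,U)≠x]`
    (Rneg : S → X → ℝ)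
    (hRneg : ∀ s x,
      Rneg s x = (∑ u, if fX s u ≠ x then μ u * fY s x u else 0) / (1 - Pb s x)) :
    ∀ s x,
      R s x = Pb s x * Rtil s x + (1 - Pb s x) * Rneg s x ∧
      Pb s x * Rtil s x + a * (1 - Pb s x) ≤ R s x ∧
      R s x ≤ Pb s x * Rtil s x + b * (1 - Pb s x) := by
  intro s x
  have hPpos := hPbpos s x
  have hPlt := hPblt s x
  have h1P : (0:ℝ) < 1 - Pb s x := by linarith
  set A := ∑ u, if fX s u = x then μ u * fY s x u else 0 with hA
  set B := ∑ u, if fX s u ≠ x then μ u * fY s x u else 0 with hB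
  have hRd : R s x = A + B := by
    rw [hR, hA, hB, ← Finset.sum_add_distrib]
    apply Finset.sum_congr rfl
    intro u _
    by_cases h : fX s u = x <;> simp [h]
  have hAt : Pb s x * Rtil s x = A := by
    rw [hRtil]; field_simp
    exact hA.symm
  have hBt : (1 - Pb s x) * Rneg s x = B := by
    rw [hRneg]; field_simp
    rw [hB]
  have hQ : 1 - Pb s x = ∑ u, if fX s u ≠ x then μ u else 0 := by
    rw [hPb]
    have : (∑ u, if fX s u = x then μ u else 0) + (∑ u, if fX s u ≠ x then μ u else 0) = 1 := by
      rw [← Finset.sum_add_distrib, ← hμ1]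
      apply Finset.sum_congr rfl
      intro u _
      by_cases h : fX s u = x <;> simp [h]
    linarith
  have hBlo : a * (1 - Pb s x) ≤ B := by
    rw [hQ, Finset.mul_sum, hB]
    apply Finset.sum_le_sum
    intro u _
    by_cases h : fX s u = x <;> simp [h]
    calc a * μ u ≤ fY s x u * μ u := by
          apply mul_le_mul_of_nonneg_right (hYa s x u) (hμ0 u)
      _ = μ u * fY s x u := mul_comm _ _
  have hBhi : B ≤ b * (1 - Pb s x) := by
    rw [hQ, Finset.mul_sum, hB]
    apply Finset.sum_le_sum
    intro u _
    by_cases h : fX s u = x <;> simp [h]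
    calc μ u * fY s x u = fY s x u * μ u := mul_comm _ _
      _ ≤ b * μ u := mul_le_mul_of_nonneg_right (hYb s x u) (hμ0 u)
  refine ⟨by rw [hRd, hAt, hBt], by linarith, by linarith⟩
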